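/- Let y = exp((1/8 − θ/2) log N / log log N) with 0 < θ < 1/4, let ω₀ = log log N / log log log log N, and let k = (log log log N)³. Then for N sufficiently large, ∑_{d: p|d ⇒ y < p < N, ω(d) ≥ ω₀} 1/d ≤ k^{−ω₀} ∏_{y < p < N} (1 + k/(p−1)) ≪ 1/(log N)². -/

import Mathlib

set_option maxHeartbeats 1000000

open Finset
open scoped Classical


private lemma cheb (M : ℕ) :
    ∑ p ∈ (range M).filter Nat.Prime, Real.log p ≤ M * Real.log 4 := by
  have h1 : ∑ p ∈ (range M).filter Nat.Prime, Real.log p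
      ≤ ∑ p ∈ (range (M+1)).filter Nat.Prime, Real.log p := by
    apply Finset.sum_le_sum_of_subset_of_nonneg
    · exact Finset.filter_subset_filter _ (Finset.range_subset_range.2 (Nat.le_succ M))
    · intro p hp _
      have h2 : 2 ≤ p := (Finset.mem_filter.1 hp).2.two_le
      exact Real.log_nonneg (by exact_mod_cast Nat.one_le_of_lt h2)
  refine h1.trans ?_
  have h2 : ∑ p ∈ (range (M+1)).filter Nat.Prime, Real.log p = Real.log (primorial M) := by
    rw [primorial, Nat.cast_prod, Real.log_prod]
    intro p hp
    have : 2 ≤ p := (Finset.mem_filter.1 hp).2.two_le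
    exact_mod_cast (Nat.lt_of_lt_of_le Nat.zero_lt_two this).ne'
  rw [h2]
  calc Real.log (primorial M) ≤ Real.log ((4:ℕ)^M) := by
        apply Real.log_le_log (by exact_mod_cast primorial_pos M)
        exact_mod_cast primorial_le_4_pow M
    _ = M * Real.log 4 := by push_cast [Real.log_pow]; ring

-- 1/(x+1) ≤ log(x+1) - log x for x > 0
private lemma logstep {x : ℝ} (hx : 0 < x) : 1/(x+1) ≤ Real.log (x+1) - Real.log x := by
  have h1 : Real.log x - Real.log (x+1) = Real.log (x / (x+1)) := by
    rw [Real.log_div hx.ne' (by linarith)]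
  have h2 : Real.log (x/(x+1)) ≤ x/(x+1) - 1 := Real.log_le_sub_one_of_pos (by positivity)
  have h3 : x/(x+1) - 1 = -(1/(x+1)) := by field_simp; ring
  linarith [h1 ▸ h2, h3 ▸ (h1 ▸ h2)]

private lemma harmonic' (a : ℕ) (ha : 2 ≤ a) : ∀ b : ℕ, a ≤ b →
    ∑ i ∈ Icc a b, (1:ℝ)/i ≤ Real.log b - Real.log ((a:ℝ)-1) := by
  refine Nat.le_induction ?_ ?_
  · rw [Finset.Icc_self, Finset.sum_singleton]
    have hx : (0:ℝ) < (a:ℝ) - 1 := by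
      have : (2:ℝ) ≤ a := by exact_mod_cast ha
      linarith
    have := logstep hx
    simpa using this.trans_eq (by ring_nf)
  · intro b hb ih
    rw [Finset.sum_Icc_succ_top (by omega)]
    have hx : (0:ℝ) < (b:ℝ) := by
      have : 2 ≤ b := le_trans ha hb
      exact_mod_cast (Nat.lt_of_lt_of_le Nat.zero_lt_two this)
    have h2 := logstep hx
    push_cast
    push_cast at ih h2
    linarith

private lemma blocksum (i : ℕ) (hi : 1 ≤ i) (t : Finset ℕ)
    (ht : ∀ p ∈ t, p.Prime ∧ Nat.log 2 p = i) : ∑ p ∈ t, (1/p : ℝ) ≤ 4 / i := by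
  set S : Finset ℕ := (range (2^(i+1))).filter (fun p => p.Prime ∧ 2^i ≤ p) with hS
  have htS : t ⊆ S := by
    intro p hp
    obtain ⟨hp1, hp2⟩ := ht p hp
    have hp0 : p ≠ 0 := hp1.pos.ne'
    refine Finset.mem_filter.2 ⟨Finset.mem_range.2 ?_, hp1, ?_⟩
    · have := Nat.lt_pow_succ_log_self (b := 2) one_lt_two p
      rwa [hp2] at this
    · have := Nat.pow_log_le_self 2 hp0
      rwa [hp2] at this
  -- card S * (i * log 2) ≤ 2^(i+1) * log 4
  have hcard : (S.card : ℝ) * (i * Real.log 2) ≤ 2^(i+1) * Real.log 4 := by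
    have h1 : S.card • ((i:ℝ) * Real.log 2) ≤ ∑ p ∈ S, Real.log p := by
      apply Finset.card_nsmul_le_sum
      intro p hp
      obtain ⟨_, hp1, hp2⟩ := Finset.mem_filter.1 hp
      calc (i:ℝ) * Real.log 2 = Real.log ((2:ℕ)^i) := by
            push_cast [Real.log_pow]; ring
        _ ≤ Real.log p := Real.log_le_log (by positivity) (by exact_mod_cast hp2)
    have h2 : ∑ p ∈ S, Real.log p ≤ ∑ p ∈ (range (2^(i+1))).filter Nat.Prime, Real.log p := by
      apply Finset.sum_le_sum_of_subset_of_nonneg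
      · intro p hp
        obtain ⟨hr, hp1, _⟩ := Finset.mem_filter.1 hp
        exact Finset.mem_filter.2 ⟨hr, hp1⟩
      · intro p hp _
        have h2 : 2 ≤ p := (Finset.mem_filter.1 hp).2.two_le
        exact Real.log_nonneg (by exact_mod_cast Nat.one_le_of_lt h2)
    have h3 := cheb (2^(i+1))
    rw [nsmul_eq_mul] at h1
    push_cast at h1 h3 ⊢
    linarith
  have hlog2 : (0:ℝ) < Real.log 2 := Real.log_pos one_lt_two
  have hlog4 : Real.log 4 = 2 * Real.log 2 := by
    rw [show (4:ℝ) = 2^2 by norm_num, Real.log_pow]; push_cast; ring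
  have hcard2 : (S.card : ℝ) * i ≤ 2^(i+2) := by
    rw [hlog4] at hcard
    have h4 : (2:ℝ)^(i+2) = 2^(i+1) * 2 := by ring
    nlinarith
  have hsum : ∑ p ∈ t, (1/p : ℝ) ≤ (t.card : ℝ) * (1/2^i) := by
    have := Finset.sum_le_card_nsmul t (fun p => (1/p:ℝ)) (1/2^i) ?_
    · rwa [nsmul_eq_mul] at this
    · intro p hp
      obtain ⟨hp1, hp2⟩ := ht p hp
      have h5 : (2:ℝ)^i ≤ p := by
        have := Nat.pow_log_le_self 2 hp1.pos.ne'
        rw [hp2] at this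
        exact_mod_cast this
      have h6 : (0:ℝ) < 2^i := by positivity
      exact one_div_le_one_div_of_le h6 h5
  have hcardle : (t.card : ℝ) ≤ S.card := by exact_mod_cast Finset.card_le_card htS
  have hi' : (0:ℝ) < i := by exact_mod_cast hi
  calc ∑ p ∈ t, (1/p:ℝ) ≤ (t.card : ℝ) * (1/2^i) := hsum
    _ ≤ 4 / i := by
      rw [le_div_iff₀ hi']
      have h7 : (0:ℝ) < 2^i := by positivity
      have h8 : (2:ℝ)^(i+2) = 4 * 2^i := by ring
      calc (t.card:ℝ) * (1/2^i) * i = (t.card:ℝ) * i / 2^i := by ring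
        _ ≤ (S.card:ℝ) * i / 2^i := by
            gcongr
        _ ≤ 2^(i+2) / 2^i := by gcongr
        _ = 4 := by rw [h8]; field_simp

private lemma primesum (a n : ℕ) (ha : 2 ≤ a) (han : a ≤ Nat.log 2 n) :
    ∑ p ∈ (range n).filter (fun p => p.Prime ∧ 2^a ≤ p), (1/p:ℝ)
      ≤ 4 * (Real.log (Nat.log 2 n) - Real.log ((a:ℝ)-1)) := by
  classical
  set T : Finset ℕ := (range n).filter (fun p => p.Prime ∧ 2^a ≤ p) with hT
  have hmaps : ∀ p ∈ T, Nat.log 2 p ∈ Icc a (Nat.log 2 n) := by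
    intro p hp
    obtain ⟨hr, hp1, hp2⟩ := Finset.mem_filter.1 hp
    refine Finset.mem_Icc.2 ⟨Nat.le_log_of_pow_le one_lt_two hp2, ?_⟩
    exact Nat.log_monotone (le_of_lt (Finset.mem_range.1 hr))
  have hfib := Finset.sum_fiberwise_of_maps_to hmaps (fun p => (1/p:ℝ))
  rw [← hfib]
  have hstep : ∑ i ∈ Icc a (Nat.log 2 n), ∑ p ∈ T.filter (fun p => Nat.log 2 p = i), (1/p:ℝ)
      ≤ ∑ i ∈ Icc a (Nat.log 2 n), 4/(i:ℝ) := by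
    apply Finset.sum_le_sum
    intro i hi
    have hi1 : 1 ≤ i := le_trans (by omega) (Finset.mem_Icc.1 hi).1
    apply blocksum i hi1
    intro p hp
    obtain ⟨hpT, hpi⟩ := Finset.mem_filter.1 hp
    exact ⟨(Finset.mem_filter.1 hpT).2.1, hpi⟩
  refine hstep.trans ?_
  have h4 : ∑ i ∈ Icc a (Nat.log 2 n), (4:ℝ)/i
      = 4 * ∑ i ∈ Icc a (Nat.log 2 n), (1:ℝ)/i := by
    rw [Finset.mul_sum]
    apply Finset.sum_congr rfl
    intro i _; ring
  rw [h4]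
  have := harmonic' a ha (Nat.log 2 n) han
  linarith

private lemma geomfactor (k : ℝ) (hk : 0 ≤ k) (p B : ℕ) (hp : 2 ≤ p) :
    ∑ e ∈ range B, (if e = 0 then (1:ℝ) else k * ((p:ℝ)⁻¹)^e) ≤ 1 + k / ((p:ℝ) - 1) := by
  rcases Nat.eq_zero_or_pos B with hB | hB
  · subst hB
    simp only [range_zero, Finset.sum_empty]
    have : (1:ℝ) ≤ (p:ℝ) - 1 := by
      have : (2:ℝ) ≤ p := by exact_mod_cast hp
      linarith
    positivity
  have hq : (2:ℝ) ≤ (p:ℝ) := by exact_mod_cast hp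
  set r : ℝ := ((p:ℝ))⁻¹ with hr
  have hr0 : 0 < r := by positivity
  have hr1 : r < 1 := by
    rw [hr]
    rw [inv_lt_one_iff₀]
    right; linarith
  have hrne : r ≠ 1 := ne_of_lt hr1
  have hsplit : ∑ e ∈ range B, (if e = 0 then (1:ℝ) else k * r^e)
      = 1 + ∑ e ∈ Finset.Ico 1 B, (if e = 0 then (1:ℝ) else k * r^e) := by
    rw [Finset.range_eq_Ico, Finset.sum_eq_sum_Ico_succ_bot hB]
    simp
  rw [hsplit]
  have hIco : ∑ e ∈ Finset.Ico 1 B, (if e = 0 then (1:ℝ) else k * r^e)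
      = k * ∑ e ∈ Finset.Ico 1 B, r^e := by
    rw [Finset.mul_sum]
    apply Finset.sum_congr rfl
    intro e he
    have : e ≠ 0 := by have := (Finset.mem_Ico.1 he).1; omega
    simp [this]
  rw [hIco]
  have hgeom : ∑ e ∈ Finset.Ico 1 B, r^e ≤ 1 / ((p:ℝ) - 1) := by
    have h1 : ∑ e ∈ range B, r^e = (r^B - 1)/(r - 1) := geom_sum_eq hrne B
    have h2 : ∑ e ∈ range B, r^e = 1 + ∑ e ∈ Finset.Ico 1 B, r^e := by
      rw [Finset.range_eq_Ico, Finset.sum_eq_sum_Ico_succ_bot hB]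
      simp
    have h3 : (0:ℝ) ≤ r^B := by positivity
    have h4 : (0:ℝ) < 1 - r := by linarith
    have h5 : (0:ℝ) < (p:ℝ) - 1 := by linarith
    have h6 : ∑ e ∈ Finset.Ico 1 B, r^e = (r^B - 1)/(r-1) - 1 := by linarith
    have hA : (r^B - 1)/(r-1) = (1-r^B)/(1-r) := by
      rw [div_eq_div_iff (by linarith) (by linarith)]; ring
    have h8 : (1-r^B)/(1-r) ≤ 1/(1-r) := by
      gcongr
      linarith
    have hB2 : 1/(1-r) - 1 = 1/((p:ℝ)-1) := by
      have hq0 : (p:ℝ) ≠ 0 := by linarith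
      have h1r : 1 - r ≠ 0 := ne_of_gt h4
      have h5' : (p:ℝ) - 1 ≠ 0 := ne_of_gt h5
      rw [hr] at h1r ⊢
      field_simp
      ring
    rw [h6]
    linarith
  calc 1 + k * ∑ e ∈ Finset.Ico 1 B, r^e ≤ 1 + k * (1/((p:ℝ)-1)) := by
        have := mul_le_mul_of_nonneg_left hgeom hk
        linarith
    _ = 1 + k / ((p:ℝ)-1) := by ring

private lemma eulerbound (k : ℝ) (hk : 0 ≤ k) (P : Finset ℕ) (hP : ∀ p ∈ P, p.Prime)
    (t : Finset ℕ) (ht0 : ∀ m ∈ t, m ≠ 0) (htP : ∀ m ∈ t, m.primeFactors ⊆ P) :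
    ∑ m ∈ t, ((k ^ m.primeFactors.card : ℝ) / m) ≤ ∏ p ∈ P, (1 + k / ((p:ℝ) - 1)) := by
  classical
  set B := t.sup id + 1 with hB
  set g : ℕ → ℕ → ℝ := fun p e => if e = 0 then 1 else k * ((p:ℝ)⁻¹)^e with hg
  have hgnn : ∀ p e, 0 ≤ g p e := by
    intro p e
    by_cases h : e = 0 <;> simp only [hg, h, if_true, if_false, ite_true, ite_false] <;> positivity
  -- product over primeFactors identity
  have hprodm : ∀ m ∈ t, (∏ p ∈ m.primeFactors, p ^ m.factorization p) = m := by
    intro m hm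
    rw [← Nat.support_factorization]
    exact Nat.factorization_prod_pow_eq_self (ht0 m hm)
  have hval : ∀ m ∈ t, ((k ^ m.primeFactors.card : ℝ) / m)
      = ∏ x ∈ P.attach, g x.1 (m.factorization x.1) := by
    intro m hm
    rw [Finset.prod_attach P (fun p => g p (m.factorization p))]
    have hsub := htP m hm
    have hside : ∀ p ∈ P, p ∉ m.primeFactors → g p (m.factorization p) = 1 := by
      intro p _ hp
      have : m.factorization p = 0 := by
        rw [← Nat.support_factorization] at hp
        exact Finsupp.notMem_support_iff.1 hp
      simp [hg, this]
    rw [← Finset.prod_subset hsub hside]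
    have hF : ∀ p ∈ m.primeFactors, g p (m.factorization p)
        = k * (((p:ℝ))⁻¹)^(m.factorization p) := by
      intro p hp
      have : m.factorization p ≠ 0 := by
        rw [← Nat.support_factorization] at hp
        exact Finsupp.mem_support_iff.1 hp
      simp [hg, this]
    rw [Finset.prod_congr rfl hF, Finset.prod_mul_distrib, Finset.prod_const]
    have hm' : (m:ℝ) = ∏ p ∈ m.primeFactors, ((p:ℝ))^(m.factorization p) := by
      exact_mod_cast (hprodm m hm).symm
    have hmne : (0:ℝ) < ∏ p ∈ m.primeFactors, ((p:ℝ))^(m.factorization p) := by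
      apply Finset.prod_pos
      intro p hp
      have hpp : (0:ℝ) < p := by exact_mod_cast (Nat.prime_of_mem_primeFactors hp).pos
      positivity
    rw [hm']
    rw [show ∏ p ∈ m.primeFactors, (((p:ℝ))⁻¹)^(m.factorization p)
        = (∏ p ∈ m.primeFactors, ((p:ℝ))^(m.factorization p))⁻¹ by
      rw [← Finset.prod_inv_distrib]
      apply Finset.prod_congr rfl
      intro p _
      rw [inv_pow]]
    rw [div_eq_mul_inv]
  -- the pi map
  set e : ℕ → (∀ p ∈ P, ℕ) := fun m => fun p _ => m.factorization p with he
  have himg : ∀ m ∈ t, e m ∈ P.pi (fun _ => range B) := by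
    intro m hm
    rw [Finset.mem_pi]
    intro p hp
    rw [Finset.mem_range]
    calc m.factorization p < m := Nat.factorization_lt p (ht0 m hm)
      _ < B := by
        rw [hB]
        have : m ≤ t.sup id := Finset.le_sup (f := id) hm
        omega
  have hinj : ∀ m₁ ∈ t, ∀ m₂ ∈ t, e m₁ = e m₂ → m₁ = m₂ := by
    intro m₁ hm₁ m₂ hm₂ heq
    have hfac : m₁.factorization = m₂.factorization := by
      ext p
      by_cases hp : p ∈ P
      · exact congrFun (congrFun heq p) hp
      · have h1 : m₁.factorization p = 0 := by
          rw [← Finsupp.notMem_support_iff, Nat.support_factorization]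
          exact fun h => hp (htP m₁ hm₁ h)
        have h2 : m₂.factorization p = 0 := by
          rw [← Finsupp.notMem_support_iff, Nat.support_factorization]
          exact fun h => hp (htP m₂ hm₂ h)
        rw [h1, h2]
    calc m₁ = m₁.factorization.prod (· ^ ·) := (Nat.factorization_prod_pow_eq_self (ht0 _ hm₁)).symm
      _ = m₂.factorization.prod (· ^ ·) := by rw [hfac]
      _ = m₂ := Nat.factorization_prod_pow_eq_self (ht0 _ hm₂)
  calc ∑ m ∈ t, ((k ^ m.primeFactors.card : ℝ) / m)
      = ∑ m ∈ t, ∏ x ∈ P.attach, g x.1 (m.factorization x.1) := Finset.sum_congr rfl hval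
    _ = ∑ f ∈ t.image e, ∏ x ∈ P.attach, g x.1 (f x.1 x.2) := by
        rw [Finset.sum_image]
        exact hinj
    _ ≤ ∑ f ∈ P.pi (fun _ => range B), ∏ x ∈ P.attach, g x.1 (f x.1 x.2) := by
        apply Finset.sum_le_sum_of_subset_of_nonneg
        · intro f hf
          obtain ⟨m, hm, rfl⟩ := Finset.mem_image.1 hf
          exact himg m hm
        · intro f _ _
          exact Finset.prod_nonneg (fun x _ => hgnn _ _)
    _ = ∏ p ∈ P, ∑ a ∈ range B, g p a := (Finset.prod_sum P (fun _ => range B) g).symm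
    _ ≤ ∏ p ∈ P, (1 + k / ((p:ℝ) - 1)) := by
        apply Finset.prod_le_prod
        · intro p _
          exact Finset.sum_nonneg (fun a _ => hgnn _ _)
        · intro p hp
          exact geomfactor k hk p B (hP p hp).two_le


private lemma partA (N : ℕ) (y k w : ℝ) (hk : 1 ≤ k) :
    (∑' d : {d : ℕ // 0 < d ∧
          (∀ p : ℕ, p.Prime → p ∣ d → y < (p : ℝ) ∧ p < N) ∧
          w ≤ ((d : ℕ).primeFactors.card : ℝ)},
        (1 : ℝ) / (d : ℕ))
      ≤ k ^ (-w) *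
        ∏ p ∈ (Finset.range N).filter (fun p : ℕ => p.Prime ∧ y < (p : ℝ)),
          (1 + k / ((p : ℝ) - 1)) := by
  classical
  set P := (Finset.range N).filter (fun p : ℕ => p.Prime ∧ y < (p : ℝ)) with hPdef
  have hk0 : (0:ℝ) < k := lt_of_lt_of_le one_pos hk
  have hPprime : ∀ p ∈ P, p.Prime := fun p hp => (Finset.mem_filter.1 hp).2.1
  have key : ∀ u : Finset {d : ℕ // 0 < d ∧
      (∀ p : ℕ, p.Prime → p ∣ d → y < (p : ℝ) ∧ p < N) ∧
      w ≤ ((d : ℕ).primeFactors.card : ℝ)},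
      ∑ d ∈ u, (1 : ℝ) / ((d : ℕ) : ℝ)
        ≤ k ^ (-w) * ∏ p ∈ P, (1 + k / ((p : ℝ) - 1)) := by
    intro u
    set t := u.image (fun d => d.1) with htdef
    have hmem : ∀ m ∈ t, 0 < m ∧ (∀ p : ℕ, p.Prime → p ∣ m → y < (p:ℝ) ∧ p < N)
        ∧ w ≤ (m.primeFactors.card : ℝ) := by
      intro m hm
      obtain ⟨d, _, rfl⟩ := Finset.mem_image.1 hm
      exact d.2
    have hsum_img : ∑ d ∈ u, (1:ℝ)/((d:ℕ):ℝ) = ∑ m ∈ t, (1:ℝ)/(m:ℝ) := by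
      rw [htdef, Finset.sum_image]
      intro a _ b _ hab
      exact Subtype.ext hab
    have htP : ∀ m ∈ t, m.primeFactors ⊆ P := by
      intro m hm p hp
      have hpp := Nat.prime_of_mem_primeFactors hp
      have hpd := Nat.dvd_of_mem_primeFactors hp
      obtain ⟨hyp, hpN⟩ := (hmem m hm).2.1 p hpp hpd
      exact Finset.mem_filter.2 ⟨Finset.mem_range.2 hpN, hpp, hyp⟩
    have hterm : ∀ m ∈ t, (1:ℝ)/(m:ℝ) ≤ k ^ (-w) * ((k ^ m.primeFactors.card : ℝ)/(m:ℝ)) := by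
      intro m hm
      have hm0 : (0:ℝ) ≤ 1/(m:ℝ) := by positivity
      have h1 : (1:ℝ) ≤ k ^ (-w) * (k:ℝ) ^ (m.primeFactors.card : ℕ) := by
        have heq : k ^ (-w) * (k : ℝ) ^ (m.primeFactors.card : ℕ)
            = k ^ (-w + (m.primeFactors.card : ℝ)) := by
          rw [Real.rpow_add hk0, Real.rpow_natCast]
        rw [heq]
        calc (1:ℝ) = k ^ (0:ℝ) := (Real.rpow_zero k).symm
          _ ≤ _ := Real.rpow_le_rpow_of_exponent_le hk
              (by have := (hmem m hm).2.2; linarith)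
      calc (1:ℝ)/(m:ℝ) = (1/(m:ℝ)) * 1 := (mul_one _).symm
        _ ≤ (1/(m:ℝ)) * (k ^ (-w) * (k:ℝ) ^ m.primeFactors.card) :=
            mul_le_mul_of_nonneg_left h1 hm0
        _ = k ^ (-w) * ((k:ℝ) ^ m.primeFactors.card / m) := by ring
    calc ∑ d ∈ u, (1:ℝ)/((d:ℕ):ℝ) = ∑ m ∈ t, (1:ℝ)/(m:ℝ) := hsum_img
      _ ≤ ∑ m ∈ t, k ^ (-w) * ((k:ℝ) ^ m.primeFactors.card / m) := Finset.sum_le_sum hterm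
      _ = k ^ (-w) * ∑ m ∈ t, ((k:ℝ) ^ m.primeFactors.card / m) := (Finset.mul_sum _ _ _).symm
      _ ≤ k ^ (-w) * ∏ p ∈ P, (1 + k / ((p:ℝ) - 1)) := by
          apply mul_le_mul_of_nonneg_left ?_ (Real.rpow_nonneg hk0.le _)
          exact eulerbound k hk0.le P hPprime t
            (fun m hm => (hmem m hm).1.ne') htP
  exact Summable.tsum_le_of_sum_le
    (summable_of_sum_le (Pi.le_def.mpr (fun d => by positivity)) key) key

private lemma of_eventually {Q : ℕ → Prop} (h : ∀ᶠ N in Filter.atTop, Q N) :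
    ∃ N₀ : ℕ, ∀ N : ℕ, N₀ ≤ N → Q N := by
  obtain ⟨a, ha⟩ := Filter.eventually_atTop.1 h
  exact ⟨a, ha⟩

private lemma partB (N : ℕ) (c : ℝ) (hc : 0 < c) (hc1 : c < 1)
    (h1 : 1 ≤ Real.log (Real.log (Real.log N)))
    (h2 : 1 ≤ Real.log (Real.log (Real.log (Real.log N))))
    (h3 : 16 * Real.log (Real.log (Real.log N)) ^ 4 ≤ Real.log (Real.log N))
    (h4 : 8 * Real.log (Real.log N) ≤ c * Real.log N)
    (h6 : 3 ≤ N)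
    (h7 : Real.log 2 - Real.log c ≤ Real.log (Real.log (Real.log N)))
    (h8 : 1 ≤ Real.log (Real.log N))
    (h9 : 1 ≤ Real.log N) :
    ((Real.log (Real.log (Real.log N))) ^ (3 : ℕ)) ^
        (-(Real.log (Real.log N) / Real.log (Real.log (Real.log (Real.log N))))) *
      (∏ p ∈ (Finset.range N).filter (fun p : ℕ => p.Prime ∧
          Real.exp (c * Real.log N / Real.log (Real.log N)) < (p : ℝ)),
        (1 + (Real.log (Real.log (Real.log N))) ^ (3 : ℕ) / ((p : ℝ) - 1))) ≤
      1 / (Real.log N) ^ (2 : ℕ) := by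
  classical
  set L1 : ℝ := Real.log N with hL1def
  set L2 : ℝ := Real.log L1 with hL2def
  set L3 : ℝ := Real.log L2 with hL3def
  set L4 : ℝ := Real.log L3 with hL4def
  set k : ℝ := L3 ^ (3:ℕ) with hkdef
  set ly : ℝ := c * L1 / L2 with hlydef
  set y : ℝ := Real.exp ly with hydef
  set P := (Finset.range N).filter (fun p : ℕ => p.Prime ∧ y < (p : ℝ)) with hPdef
  have hL1 : (0:ℝ) < L1 := lt_of_lt_of_le one_pos h9
  have hL2 : (0:ℝ) < L2 := lt_of_lt_of_le one_pos h8
  have hL3 : (0:ℝ) < L3 := lt_of_lt_of_le one_pos h1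
  have hL4 : (0:ℝ) < L4 := lt_of_lt_of_le one_pos h2
  have hk0 : (0:ℝ) < k := by positivity
  have hlog2 : (0:ℝ) < Real.log 2 := Real.log_pos one_lt_two
  have hlog2lt : Real.log 2 < 1 := by
    have := Real.log_two_lt_d9; linarith
  have hly8 : (8:ℝ) ≤ ly := by
    rw [hlydef, le_div_iff₀ hL2]; linarith
  have hly0 : (0:ℝ) < ly := by linarith
  set a : ℕ := ⌊ly / Real.log 2⌋₊ with hadef
  have hdiv8 : (8:ℝ) ≤ ly / Real.log 2 := by
    rw [le_div_iff₀ hlog2]; nlinarith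
  have ha8 : 8 ≤ a := Nat.le_floor (by exact_mod_cast hdiv8)
  have ha2 : 2 ≤ a := by omega
  have ha8' : (8:ℝ) ≤ (a:ℝ) := by exact_mod_cast ha8
  have hfloor_le : (a:ℝ) ≤ ly / Real.log 2 := Nat.floor_le (by positivity)
  have hpa : ((2:ℝ))^a ≤ y := by
    have e1 : (2:ℝ)^a = Real.exp ((a:ℝ) * Real.log 2) := by
      rw [Real.exp_nat_mul, Real.exp_log (by norm_num : (0:ℝ) < 2)]
    rw [e1, hydef, Real.exp_le_exp]
    rw [le_div_iff₀ hlog2] at hfloor_le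
    linarith
  have hNR : (N:ℝ) = Real.exp L1 := by
    rw [hL1def, Real.exp_log (by exact_mod_cast (by omega : 0 < N))]
  have hlyL1 : ly < L1 := by
    have e1 : ly ≤ c * L1 := by
      rw [hlydef]
      apply div_le_self (by positivity) h8
    nlinarith
  have hyN : y < (N:ℝ) := by
    rw [hydef, hNR]
    exact Real.exp_lt_exp.2 hlyL1
  have h2aN : 2^a ≤ N := by
    have : ((2^a : ℕ):ℝ) < (N:ℝ) := by push_cast; linarith
    exact_mod_cast this.le
  have haI : a ≤ Nat.log 2 N := Nat.le_log_of_pow_le one_lt_two h2aN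
  have hI0 : (0:ℝ) < (Nat.log 2 N : ℝ) := by
    have : 2 ≤ Nat.log 2 N := le_trans ha2 haI
    exact_mod_cast Nat.lt_of_lt_of_le Nat.zero_lt_two this
  have hIle : (Nat.log 2 N : ℝ) ≤ L1 / Real.log 2 := by
    have e1 : (2:ℕ)^(Nat.log 2 N) ≤ N := Nat.pow_log_le_self 2 (by omega)
    have e2 : ((2:ℝ))^(Nat.log 2 N) ≤ (N:ℝ) := by exact_mod_cast e1
    have e3 : Real.log ((2:ℝ)^(Nat.log 2 N)) ≤ L1 :=
      Real.log_le_log (by positivity) e2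
    rw [Real.log_pow] at e3
    rw [le_div_iff₀ hlog2]
    exact_mod_cast e3
  -- prime reciprocal sum bound
  have hPsub : P ⊆ (range N).filter (fun p => p.Prime ∧ 2^a ≤ p) := by
    intro p hp
    obtain ⟨hr, hpp, hyp⟩ := Finset.mem_filter.1 hp
    refine Finset.mem_filter.2 ⟨hr, hpp, ?_⟩
    have : ((2^a : ℕ):ℝ) < (p:ℝ) := by push_cast; linarith
    exact_mod_cast this.le
  have hS1 : ∑ p ∈ P, (1:ℝ)/p ≤ ∑ p ∈ (range N).filter (fun p => p.Prime ∧ 2^a ≤ p), (1:ℝ)/p :=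
    Finset.sum_le_sum_of_subset_of_nonneg hPsub (fun p _ _ => by positivity)
  have hS2 := primesum a N ha2 haI
  have hIlogb : Real.log (Nat.log 2 N) ≤ L2 - Real.log (Real.log 2) := by
    calc Real.log (Nat.log 2 N) ≤ Real.log (L1 / Real.log 2) := Real.log_le_log hI0 hIle
      _ = L2 - Real.log (Real.log 2) := by
          rw [Real.log_div (ne_of_gt hL1) (ne_of_gt hlog2), hL2def]
  have halow : ly / (2*Real.log 2) ≤ (a:ℝ) - 1 := by
    have hlt : ly / Real.log 2 < (a:ℝ) + 1 := Nat.lt_floor_add_one _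
    rw [div_lt_iff₀ hlog2] at hlt
    rw [div_le_iff₀ (by positivity)]
    have hint : 3 * Real.log 2 ≤ (a:ℝ) * Real.log 2 :=
      mul_le_mul_of_nonneg_right (by linarith : (3:ℝ) ≤ (a:ℝ)) hlog2.le
    linarith [hlt, hint]
  have ha1pos : (0:ℝ) < (a:ℝ) - 1 := by linarith
  have hlyl : Real.log ly = Real.log c + L2 - L3 := by
    rw [hlydef, Real.log_div (by positivity) (ne_of_gt hL2),
      Real.log_mul (ne_of_gt hc) (ne_of_gt hL1), hL2def, hL3def]
  have halogb : Real.log c + L2 - L3 - Real.log (2*Real.log 2) ≤ Real.log ((a:ℝ)-1) := by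
    have hq : Real.log (ly / (2*Real.log 2)) ≤ Real.log ((a:ℝ)-1) :=
      Real.log_le_log (by positivity) halow
    rw [Real.log_div (ne_of_gt hly0) (by positivity), hlyl] at hq
    linarith
  have hdiff : Real.log (Nat.log 2 N) - Real.log ((a:ℝ)-1) ≤ 2 * L3 := by
    have hlog2log2 : Real.log (2*Real.log 2) - Real.log (Real.log 2) = Real.log 2 := by
      rw [Real.log_mul two_ne_zero (ne_of_gt hlog2)]; ring
    linarith
  have hS : ∑ p ∈ P, (1:ℝ)/p ≤ 8 * L3 := by
    have e1 := hS1.trans hS2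
    have e2 : (4:ℝ) * (Real.log (Nat.log 2 N) - Real.log ((a:ℝ)-1)) ≤ 4 * (2*L3) := by
      linarith
    calc ∑ p ∈ P, (1:ℝ)/p ≤ 4 * (Real.log (Nat.log 2 N) - Real.log ((a:ℝ)-1)) := by
          refine e1.trans_eq ?_
          norm_num
      _ ≤ 8 * L3 := by linarith
  have hsum3 : ∑ p ∈ P, k/((p:ℝ)-1) ≤ 16 * L3^4 := by
    have step : ∀ p ∈ P, k/((p:ℝ)-1) ≤ 2*k*((1:ℝ)/p) := by
      intro p hp
      have hpp : p.Prime := (Finset.mem_filter.1 hp).2.1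
      have hp2 : (2:ℝ) ≤ (p:ℝ) := by exact_mod_cast hpp.two_le
      have e1 : 2*k*((1:ℝ)/p) = 2*k/p := by ring
      rw [e1, div_le_div_iff₀ (by linarith) (by linarith : (0:ℝ) < p)]
      have hint : 0 ≤ k * ((p:ℝ) - 2) := mul_nonneg hk0.le (by linarith)
      nlinarith [hint]
    calc ∑ p ∈ P, k/((p:ℝ)-1) ≤ ∑ p ∈ P, 2*k*((1:ℝ)/p) := Finset.sum_le_sum step
      _ = 2*k * ∑ p ∈ P, (1:ℝ)/p := by rw [Finset.mul_sum]
      _ ≤ 2*k * (8*L3) := by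
          apply mul_le_mul_of_nonneg_left hS (by positivity)
      _ = 16 * L3^4 := by rw [hkdef]; ring
  have hprodle : ∏ p ∈ P, (1 + k/((p:ℝ)-1)) ≤ Real.exp L2 := by
    calc ∏ p ∈ P, (1 + k/((p:ℝ)-1)) ≤ ∏ p ∈ P, Real.exp (k/((p:ℝ)-1)) := by
          apply Finset.prod_le_prod
          · intro p hp
            have hpp : p.Prime := (Finset.mem_filter.1 hp).2.1
            have hp2 : (2:ℝ) ≤ (p:ℝ) := by exact_mod_cast hpp.two_le
            have : (0:ℝ) ≤ k/((p:ℝ)-1) := by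
              apply div_nonneg hk0.le; linarith
            linarith
          · intro p hp
            have := Real.add_one_le_exp (k/((p:ℝ)-1))
            linarith
      _ = Real.exp (∑ p ∈ P, k/((p:ℝ)-1)) := (Real.exp_sum _ _).symm
      _ ≤ Real.exp L2 := Real.exp_le_exp.2 (hsum3.trans h3)
  have hrw : (k:ℝ) ^ (-(L2/L4)) = Real.exp (-(3*L2)) := by
    rw [Real.rpow_def_of_pos hk0]
    congr 1
    rw [hkdef, Real.log_pow]
    push_cast
    rw [← hL4def]
    field_simp
  calc k ^ (-(L2/L4)) * ∏ p ∈ P, (1 + k/((p:ℝ)-1))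
      ≤ Real.exp (-(3*L2)) * Real.exp L2 := by
        rw [hrw]
        exact mul_le_mul_of_nonneg_left hprodle (Real.exp_pos _).le
    _ = Real.exp (-(2*L2)) := by rw [← Real.exp_add]; ring_nf
    _ = 1 / L1 ^ (2:ℕ) := by
        rw [show -(2*L2) = -(L2 + L2) by ring, Real.exp_neg, Real.exp_add,
          Real.exp_log hL1]
        rw [one_div, sq]

/-- With `y = exp((1/8 - θ/2) log N / log log N)`, `ω₀ = log log N / log log log log N`
and `k = (log log log N)³`, for large `N` the sum of `1/d` over `d` whose prime factors
lie in `(y, N)` and with `ω(d) ≥ ω₀` is at most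
`k^{-ω₀} ∏_{y < p < N} (1 + k/(p-1)) ≪ 1/(log N)²`. -/
theorem stmt_14 (θ : ℝ) (hθ : 0 < θ) (hθ4 : θ < 1 / 4) :
    ∃ C > (0 : ℝ), ∃ N₀ : ℕ, ∀ N : ℕ, N₀ ≤ N →
      (∑' d : {d : ℕ // 0 < d ∧
            (∀ p : ℕ, p.Prime → p ∣ d →
              Real.exp ((1 / 8 - θ / 2) * Real.log N / Real.log (Real.log N)) < (p : ℝ)
                ∧ p < N) ∧
            Real.log (Real.log N) / Real.log (Real.log (Real.log (Real.log N))) ≤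
              ((d : ℕ).primeFactors.card : ℝ)},
          (1 : ℝ) / (d : ℕ)) ≤
        ((Real.log (Real.log (Real.log N))) ^ (3 : ℕ)) ^
            (-(Real.log (Real.log N) / Real.log (Real.log (Real.log (Real.log N))))) *
          ∏ p ∈ (Finset.range N).filter (fun p : ℕ => p.Prime ∧
              Real.exp ((1 / 8 - θ / 2) * Real.log N / Real.log (Real.log N)) < (p : ℝ)),
            (1 + (Real.log (Real.log (Real.log N))) ^ (3 : ℕ) / ((p : ℝ) - 1)) ∧
      ((Real.log (Real.log (Real.log N))) ^ (3 : ℕ)) ^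
            (-(Real.log (Real.log N) / Real.log (Real.log (Real.log (Real.log N))))) *
          (∏ p ∈ (Finset.range N).filter (fun p : ℕ => p.Prime ∧
              Real.exp ((1 / 8 - θ / 2) * Real.log N / Real.log (Real.log N)) < (p : ℝ)),
            (1 + (Real.log (Real.log (Real.log N))) ^ (3 : ℕ) / ((p : ℝ) - 1))) ≤
        C / (Real.log N) ^ (2 : ℕ) := by
  set c : ℝ := 1 / 8 - θ / 2 with hcdef
  have hc : (0:ℝ) < c := by rw [hcdef]; linarith
  have hc1 : c < 1 := by rw [hcdef]; linarith
  clear_value c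
  have t1 : Filter.Tendsto (fun N : ℕ => Real.log N) Filter.atTop Filter.atTop :=
    Real.tendsto_log_atTop.comp tendsto_natCast_atTop_atTop
  have t2 : Filter.Tendsto (fun N : ℕ => Real.log (Real.log N)) Filter.atTop Filter.atTop :=
    Real.tendsto_log_atTop.comp t1
  have t3 : Filter.Tendsto (fun N : ℕ => Real.log (Real.log (Real.log N)))
      Filter.atTop Filter.atTop := Real.tendsto_log_atTop.comp t2
  have t4 : Filter.Tendsto (fun N : ℕ => Real.log (Real.log (Real.log (Real.log N))))
      Filter.atTop Filter.atTop := Real.tendsto_log_atTop.comp t3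
  have hlitO : ∀ᶠ x : ℝ in Filter.atTop, 16 * (Real.log x)^4 ≤ x := by
    have h := (Real.isLittleO_pow_log_id_atTop (n := 4)).def (by norm_num : (0:ℝ) < 1/16)
    filter_upwards [h, Filter.eventually_ge_atTop (0:ℝ)] with x hx hx0
    simp only [Real.norm_eq_abs, id_eq] at hx
    rw [abs_of_nonneg (by positivity), abs_of_nonneg hx0] at hx
    linarith
  have F3 := t2.eventually hlitO
  have hlog : ∀ᶠ u : ℝ in Filter.atTop, 8 * Real.log u ≤ c * u := by
    have h := Real.isLittleO_log_id_atTop.def (show (0:ℝ) < c/16 by positivity)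
    filter_upwards [h, Filter.eventually_ge_atTop (1:ℝ)] with u hu hu1
    simp only [Real.norm_eq_abs, id_eq] at hu
    have h0 : (0:ℝ) ≤ u := by linarith
    rw [abs_of_nonneg h0] at hu
    have h1 : Real.log u ≤ |Real.log u| := le_abs_self _
    nlinarith [mul_nonneg hc.le h0]
  have F4 := t1.eventually hlog
  have F1 := t3.eventually_ge_atTop (1:ℝ)
  have F2 := t4.eventually_ge_atTop (1:ℝ)
  have F7 := t3.eventually_ge_atTop (Real.log 2 - Real.log c)
  have F8 := t2.eventually_ge_atTop (1:ℝ)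
  have F9 := t1.eventually_ge_atTop (1:ℝ)
  have F6 : ∀ᶠ N : ℕ in Filter.atTop, 3 ≤ N := Filter.eventually_ge_atTop 3
  refine ⟨1, one_pos, ?_⟩
  apply of_eventually
  filter_upwards [F1, F2, F3, F4, F6, F7, F8, F9] with N h1 h2 h3 h4 h6 h7 h8 h9
  constructor
  · exact partA N _ _ _
      (by calc (1:ℝ) = 1^(3:ℕ) := (one_pow 3).symm
            _ ≤ (Real.log (Real.log (Real.log N)))^(3:ℕ) :=
              pow_le_pow_left₀ (by norm_num) h1 3)
  · exact partB N c hc hc1 h1 h2 h3 h4 h6 h7 h8 h9
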